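/- Let n be even and K_n the complex pentadiagonal 2-Toeplitz matrix. If a_1 ≠ 2√(b_1c_1)·cos((k+1)π/(n+2)) for all odd k with 1 ≤ k ≤ n, and a_2 ≠ 2√(b_2c_2)·cos(kπ/(n+2)) for all even k with 1 ≤ k ≤ n, then K_n is invertible. -/

import Mathlib

open Polynomial Matrix

noncomputable def pentaK (n : ℕ) (a1 a2 b1 b2 c1 c2 : ℂ) : Matrix (Fin n) (Fin n) ℂ :=
  Matrix.of fun i j =>
    if i.val = j.val then (if i.val % 2 = 0 then a1 else a2)
    else if j.val = i.val + 2 then (if i.val % 2 = 0 then b1 else b2)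
    else if i.val = j.val + 2 then (if j.val % 2 = 0 then c1 else c2)
    else 0

noncomputable def dseq (a q : ℂ) : ℕ → ℂ
  | 0 => 1
  | 1 => a
  | (m+2) => a * dseq a q (m+1) - q * dseq a q m

def tridEnt (a b c : ℂ) (i j : ℕ) : ℂ :=
  if i = j then a else if j = i + 1 then b else if i = j + 1 then c else 0

def trid (m : ℕ) (a b c : ℂ) : Matrix (Fin m) (Fin m) ℂ :=
  Matrix.of fun i j => tridEnt a b c i.val j.val

lemma val_succAbove {n : ℕ} (p : Fin (n+1)) (i : Fin n) :
    (p.succAbove i).val = if i.val < p.val then i.val else i.val + 1 := by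
  rw [Fin.succAbove, apply_ite Fin.val]
  simp only [Fin.lt_def, Fin.coe_castSucc, Fin.val_succ]

lemma det_trid (a b c : ℂ) : ∀ m, (trid m a b c).det = dseq a (b * c) m := by
  intro m
  induction m using Nat.twoStepInduction with
  | zero => simp [dseq]
  | one => simp [dseq, trid, tridEnt, Matrix.det_fin_one]
  | more n ih1 ih2 =>
    rw [show n + 1 + 1 = (n+1) + 1 from rfl, Matrix.det_succ_row_zero,
      Fin.sum_univ_succ, Fin.sum_univ_succ]
    have hrest : ∀ j : Fin n,
        (-1 : ℂ) ^ ((j.succ.succ : Fin (n+2)) : ℕ) * trid (n+2) a b c 0 j.succ.succ *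
          ((trid (n+2) a b c).submatrix Fin.succ (j.succ.succ).succAbove).det = 0 := by
      intro j
      have h0 : trid (n+2) a b c 0 j.succ.succ = 0 := by
        simp only [trid, Matrix.of_apply, tridEnt, Fin.val_succ, Fin.val_zero]
        split_ifs <;> first | rfl | omega | exact False.elim ‹False›
      rw [h0]; ring
    rw [Finset.sum_congr rfl fun j _ => hrest j]
    simp only [Finset.sum_const_zero, add_zero]
    have hm1 : (trid (n+2) a b c).submatrix Fin.succ ((0 : Fin (n+2)).succAbove)
        = trid (n+1) a b c := by
      ext i j
      simp only [Matrix.submatrix_apply, trid, Matrix.of_apply, tridEnt, val_succAbove,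
        Fin.val_succ, Fin.val_zero, Nat.not_lt_zero, if_false]
      split_ifs <;> first | rfl | omega | exact False.elim ‹False›
    have hm2 : ((trid (n+2) a b c).submatrix Fin.succ ((0 : Fin (n+1)).succ.succAbove)).det
        = c * (trid n a b c).det := by
      rw [Matrix.det_succ_column_zero, Fin.sum_univ_succ]
      have hrest2 : ∀ i : Fin n,
          (-1 : ℂ) ^ ((i.succ : Fin (n+1)) : ℕ) *
            (trid (n+2) a b c).submatrix Fin.succ ((0 : Fin (n+1)).succ.succAbove) i.succ 0 *
            (((trid (n+2) a b c).submatrix Fin.succ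
              ((0 : Fin (n+1)).succ.succAbove)).submatrix i.succ.succAbove Fin.succ).det = 0 := by
        intro i
        have h0 : (trid (n+2) a b c).submatrix Fin.succ
            ((0 : Fin (n+1)).succ.succAbove) i.succ 0 = 0 := by
          simp only [Matrix.submatrix_apply, trid, Matrix.of_apply, tridEnt, val_succAbove,
            Fin.val_succ, Fin.val_zero]
          split_ifs <;> first | rfl | omega | exact False.elim ‹False›
        rw [h0]; ring
      rw [Finset.sum_congr rfl fun i _ => hrest2 i]
      simp only [Finset.sum_const_zero, add_zero]
      have hv : (trid (n+2) a b c).submatrix Fin.succ ((0 : Fin (n+1)).succ.succAbove) 0 0 = c := by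
        simp only [Matrix.submatrix_apply, trid, Matrix.of_apply, tridEnt, val_succAbove,
          Fin.val_succ, Fin.val_zero]
        split_ifs <;> first | rfl | omega | exact False.elim ‹False›
      have hm3 : ((trid (n+2) a b c).submatrix Fin.succ
          ((0 : Fin (n+1)).succ.succAbove)).submatrix ((0 : Fin (n+1)).succAbove) Fin.succ
          = trid n a b c := by
        ext i j
        simp only [Matrix.submatrix_apply, trid, Matrix.of_apply, tridEnt, val_succAbove,
          Fin.val_succ, Fin.val_zero, Nat.add_lt_add_iff_right, Nat.not_lt_zero, if_false]
        split_ifs <;> first | rfl | omega | exact False.elim ‹False›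
      rw [hv, hm3]
      simp
    have hv00 : trid (n+2) a b c 0 0 = a := by
      simp [trid, tridEnt]
    have hv01 : trid (n+2) a b c 0 ((0 : Fin (n+1)).succ) = b := by
      simp only [trid, Matrix.of_apply, tridEnt, Fin.val_succ, Fin.val_zero]
      split_ifs <;> first | rfl | omega | exact False.elim ‹False›
    rw [hm1, hm2, hv00, hv01, ih2, ih1]
    have hun : dseq a (b*c) (n+1+1) = a * dseq a (b*c) (n+1) - (b*c) * dseq a (b*c) n := by
      simp [dseq]
    rw [hun]
    simp only [Fin.val_zero, Fin.val_succ, pow_zero, pow_one, zero_add]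
    ring

lemma dseq_closed (l1 l2 : ℂ) (m : ℕ) :
    (l1 - l2) * dseq (l1 + l2) (l1 * l2) m = l1 ^ (m + 1) - l2 ^ (m + 1) := by
  induction m using Nat.twoStepInduction with
  | zero => simp [dseq]
  | one => show (l1-l2)*(l1+l2) = _; ring
  | more n ih1 ih2 =>
    simp only [dseq]
    linear_combination (l1 + l2) * ih2 - (l1 * l2) * ih1

lemma dseq_repeated (l : ℂ) (m : ℕ) :
    dseq (2 * l) (l ^ 2) m = (m + 1) * l ^ m := by
  induction m using Nat.twoStepInduction with
  | zero => simp [dseq]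
  | one => show 2*l = _; push_cast; ring
  | more n ih1 ih2 =>
    simp only [dseq, ih1, ih2]
    push_cast
    ring

lemma dseq_ne_zero (a s : ℂ) (hs : s ≠ 0) (t : ℕ)
    (h : ∀ j : ℕ, 1 ≤ j → j ≤ t →
      a ≠ 2 * s * (Real.cos (j * Real.pi / (t + 1)) : ℂ) ∧
      a ≠ -(2 * s * (Real.cos (j * Real.pi / (t + 1)) : ℂ))) :
    dseq a (s ^ 2) t ≠ 0 := by
  obtain ⟨δ, hδ⟩ : ∃ δ : ℂ, δ ^ 2 = a ^ 2 - 4 * s ^ 2 :=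
    IsAlgClosed.exists_pow_nat_eq _ (by norm_num : 0 < 2)
  by_cases hδ0 : δ = 0
  · -- repeated root case
    subst hδ0
    have hl2 : (a / 2) ^ 2 = s ^ 2 := by linear_combination -hδ / 4
    have hl0 : a / 2 ≠ 0 := by
      intro h0
      rw [h0] at hl2
      exact hs (by simpa [pow_eq_zero_iff] using hl2.symm)
    have ha : a = 2 * (a / 2) := by ring
    have key := dseq_repeated (a / 2) t
    rw [← ha, hl2] at key
    rw [key]
    exact mul_ne_zero (Nat.cast_add_one_ne_zero t) (pow_ne_zero _ hl0)
  · -- distinct roots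
    set l1 : ℂ := (a + δ) / 2 with hl1def
    set l2 : ℂ := (a - δ) / 2 with hl2def
    have hsum : l1 + l2 = a := by rw [hl1def, hl2def]; ring
    have hprod : l1 * l2 = s ^ 2 := by rw [hl1def, hl2def]; linear_combination (-1/4 : ℂ) * hδ
    have hne : l1 ≠ l2 := by
      intro hEq
      apply hδ0
      have : l1 - l2 = δ := by rw [hl1def, hl2def]; ring
      rw [hEq, sub_self] at this
      exact this.symm
    have hl2ne : l2 ≠ 0 := by
      intro h0
      apply hs
      have : l1 * l2 = 0 := by rw [h0, mul_zero]
      rw [hprod] at this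
      simpa [pow_eq_zero_iff] using this
    intro h0
    have hcf : (l1 - l2) * dseq a (s ^ 2) t = l1 ^ (t + 1) - l2 ^ (t + 1) := by
      rw [← hsum, ← hprod]
      exact dseq_closed l1 l2 t
    rw [h0, mul_zero] at hcf
    have heq : l1 ^ (t + 1) = l2 ^ (t + 1) := by linear_combination -hcf
    have hρN : (l1 / l2) ^ (t + 1) = 1 := by
      rw [div_pow, heq, div_self (pow_ne_zero _ hl2ne)]
    have hρ1 : l1 / l2 ≠ 1 := by
      intro hEq
      exact hne ((div_eq_one_iff_eq hl2ne).mp hEq)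
    haveI : NeZero (t + 1) := ⟨t.succ_ne_zero⟩
    obtain ⟨i, hiN, hpow⟩ :=
      (Complex.isPrimitiveRoot_exp (t + 1) t.succ_ne_zero).eq_pow_of_pow_eq_one hρN
    have hi0 : i ≠ 0 := by
      rintro rfl
      rw [pow_zero] at hpow
      exact hρ1 hpow.symm
    have hρ : l1 / l2 = Complex.exp ((i : ℂ) * (2 * Real.pi * Complex.I / ((t + 1 : ℕ) : ℂ))) := by
      rw [Complex.exp_nat_mul, hpow]
    set φ : ℝ := i * Real.pi / (t + 1) with hφdef
    set w : ℂ := Complex.exp ((φ : ℂ) * Complex.I) with hwdef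
    have hw0 : w ≠ 0 := Complex.exp_ne_zero _
    have htc : ((t : ℂ) + 1) ≠ 0 := Nat.cast_add_one_ne_zero t
    have hw2 : w ^ 2 = l1 / l2 := by
      rw [hρ, hwdef, show (2 : ℕ) = 2 from rfl, ← Complex.exp_nat_mul]
      congr 1
      rw [hφdef]
      push_cast
      field_simp
    have hcos : w + w⁻¹ = 2 * Complex.cos (φ : ℂ) := by
      rw [Complex.two_cos, hwdef, ← Complex.exp_neg]
      congr 2
      ring
    have hl1 : w ^ 2 * l2 = l1 := by rw [hw2, div_mul_cancel₀ _ hl2ne]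
    have key2 : a ^ 2 = (2 * s * Complex.cos (φ : ℂ)) ^ 2 := by
      calc a ^ 2 = ((w ^ 2 + 1) * l2) ^ 2 := by rw [← hsum, ← hl1]; ring
        _ = (w ^ 2 * l2) * l2 * (w + w⁻¹) ^ 2 := by field_simp
        _ = s ^ 2 * (w + w⁻¹) ^ 2 := by rw [hl1, hprod]
        _ = (2 * s * Complex.cos (φ : ℂ)) ^ 2 := by rw [hcos]; ring
    have hfac : (a - 2 * s * Complex.cos (φ : ℂ)) * (a + 2 * s * Complex.cos (φ : ℂ)) = 0 := by
      linear_combination key2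
    obtain ⟨hA, hB⟩ := h i (Nat.one_le_iff_ne_zero.mpr hi0) (Nat.lt_succ_iff.mp hiN)
    rw [← hφdef, Complex.ofReal_cos] at hA hB
    rcases mul_eq_zero.mp hfac with hc | hc
    · exact hA (sub_eq_zero.mp hc)
    · exact hB (by linear_combination hc)

def pairEquiv (t : ℕ) : (Fin t ⊕ Fin t) ≃ Fin (2 * t) where
  toFun x := Sum.elim (fun p => ⟨2 * p.val, by have := p.isLt; omega⟩)
    (fun p => ⟨2 * p.val + 1, by have := p.isLt; omega⟩) x
  invFun i := if h : i.val % 2 = 0 then Sum.inl ⟨i.val / 2, by have := i.isLt; omega⟩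
    else Sum.inr ⟨i.val / 2, by have := i.isLt; omega⟩
  left_inv := by
    rintro (p | p) <;> dsimp only [Sum.elim_inl, Sum.elim_inr] <;> split_ifs with h <;>
      first
        | (refine congrArg Sum.inl (Fin.ext ?_); simp only [Fin.val_mk]; omega)
        | (refine congrArg Sum.inr (Fin.ext ?_); simp only [Fin.val_mk]; omega)
        | (exact absurd h (by omega))
  right_inv := by
    intro i
    dsimp only
    split_ifs with h <;> dsimp only [Sum.elim_inl, Sum.elim_inr] <;>
      exact Fin.ext (by simp only [Fin.val_mk]; omega)

lemma pentaK_eq (t : ℕ) (a1 a2 b1 b2 c1 c2 : ℂ) :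
    pentaK (2 * t) a1 a2 b1 b2 c1 c2 =
      (Matrix.fromBlocks (trid t a1 b1 c1) 0 0 (trid t a2 b2 c2)).submatrix
        (pairEquiv t).symm (pairEquiv t).symm := by
  ext i j
  rcases hi : (pairEquiv t).symm i with p | p <;> rcases hj : (pairEquiv t).symm j with q | q <;>
    simp only [Matrix.submatrix_apply, hi, hj, Matrix.fromBlocks_apply₁₁,
      Matrix.fromBlocks_apply₁₂, Matrix.fromBlocks_apply₂₁, Matrix.fromBlocks_apply₂₂,
      Matrix.zero_apply, trid, tridEnt, pentaK, Matrix.of_apply] <;>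
  · -- extract arithmetic facts from hi, hj
    have hii := congrArg (pairEquiv t) hi
    have hjj := congrArg (pairEquiv t) hj
    rw [Equiv.apply_symm_apply] at hii hjj
    have hi' := congrArg Fin.val hii
    have hj' := congrArg Fin.val hjj
    simp only [pairEquiv, Equiv.coe_fn_mk, Sum.elim_inl, Sum.elim_inr] at hi' hj'
    split_ifs <;> first | rfl | omega

theorem stmt11 (a1 a2 b1 b2 c1 c2 : ℂ) (ha1 : a1 ≠ 0) (ha2 : a2 ≠ 0)
    (hb1 : b1 ≠ 0) (hb2 : b2 ≠ 0) (hc1 : c1 ≠ 0) (hc2 : c2 ≠ 0)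
    (t : ℕ) (ht : 1 ≤ t) (n : ℕ) (hn : n = 2 * t)
    (s1 s2 : ℂ) (hs1 : s1 ^ 2 = b1 * c1) (hs2 : s2 ^ 2 = b2 * c2)
    (h1 : ∀ k : ℕ, 1 ≤ k → k ≤ n → Odd k →
      a1 ≠ 2 * s1 * (Real.cos ((k + 1) * Real.pi / (n + 2)) : ℂ) ∧
      a1 ≠ -(2 * s1 * (Real.cos ((k + 1) * Real.pi / (n + 2)) : ℂ)))
    (h2 : ∀ k : ℕ, 1 ≤ k → k ≤ n → Even k →
      a2 ≠ 2 * s2 * (Real.cos (k * Real.pi / (n + 2)) : ℂ) ∧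
      a2 ≠ -(2 * s2 * (Real.cos (k * Real.pi / (n + 2)) : ℂ))) :
    IsUnit (pentaK n a1 a2 b1 b2 c1 c2) := by
  subst hn
  have hs1' : s1 ≠ 0 := by
    intro h0
    rw [h0] at hs1
    rcases mul_eq_zero.mp ((by simpa using hs1.symm) : b1 * c1 = 0) with h | h
    · exact hb1 h
    · exact hc1 h
  have hs2' : s2 ≠ 0 := by
    intro h0
    rw [h0] at hs2
    rcases mul_eq_zero.mp ((by simpa using hs2.symm) : b2 * c2 = 0) with h | h
    · exact hb2 h
    · exact hc2 h
  rw [pentaK_eq, Matrix.isUnit_iff_isUnit_det, Matrix.det_submatrix_equiv_self,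
    Matrix.det_fromBlocks_zero₂₁, det_trid, det_trid, isUnit_iff_ne_zero]
  apply mul_ne_zero
  · rw [← hs1]
    apply dseq_ne_zero a1 s1 hs1' t
    intro j hj1 hjt
    obtain ⟨j', rfl⟩ : ∃ j'', j = j'' + 1 := ⟨j - 1, by omega⟩
    obtain ⟨hA, hB⟩ := h1 (2 * j' + 1) (by omega) (by omega) ⟨j', by omega⟩
    have harg : ((((2 * j' + 1 : ℕ)) : ℝ) + 1) * Real.pi / (((2 * t : ℕ) : ℝ) + 2)
        = ((j' + 1 : ℕ) : ℝ) * Real.pi / ((t : ℝ) + 1) := by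
      have htne : (t : ℝ) + 1 ≠ 0 := by positivity
      push_cast
      field_simp
      ring
    rw [harg] at hA hB
    exact ⟨hA, hB⟩
  · rw [← hs2]
    apply dseq_ne_zero a2 s2 hs2' t
    intro j hj1 hjt
    obtain ⟨j', rfl⟩ : ∃ j'', j = j'' + 1 := ⟨j - 1, by omega⟩
    obtain ⟨hA, hB⟩ := h2 (2 * (j' + 1)) (by omega) (by omega) ⟨j' + 1, by omega⟩
    have harg : (((2 * (j' + 1) : ℕ)) : ℝ) * Real.pi / (((2 * t : ℕ) : ℝ) + 2)
        = ((j' + 1 : ℕ) : ℝ) * Real.pi / ((t : ℝ) + 1) := by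
      have htne : (t : ℝ) + 1 ≠ 0 := by positivity
      push_cast
      field_simp
    rw [harg] at hA hB
    exact ⟨hA, hB⟩
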